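/- The number of elements a of the m-Tamari lattice T_n^(m) with μ(a, 1̂) ≠ 0 equals 2^{n-1}, where 1̂ is the maximal element and μ is the Möbius function. -/

import Mathlib

open scoped Classical

/-- An `m`-Dyck sequence of height `n` (0-indexed): weakly increasing with `a i ≤ m * i`. -/
def IsDyck (m n : ℕ) (a : Fin n → ℕ) : Prop :=
  Monotone a ∧ ∀ i : Fin n, a i ≤ m * i.val

/-- `k` is the last index of the primitive subsequence of `a` at position `i`. -/
def IsPrimEnd (m n : ℕ) (a : Fin n → ℕ) (i k : Fin n) : Prop :=
  i ≤ k ∧ (∀ j : Fin n, i < j → j ≤ k → a j - a i < m * (j.val - i.val)) ∧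
    (k.val + 1 = n ∨ ∃ h : k.val + 1 < n, m * (k.val + 1 - i.val) ≤ a ⟨k.val + 1, h⟩ - a i)

/-- The covering relation of the `m`-Tamari lattice: decrease the primitive
subsequence at a position `i+1` with `a i < a (i+1)` by one. -/
def Covers (m n : ℕ) (a b : Fin n → ℕ) : Prop :=
  ∃ (i : ℕ) (h : i + 1 < n) (k : Fin n),
    a ⟨i, Nat.lt_of_succ_lt h⟩ < a ⟨i + 1, h⟩ ∧
    IsPrimEnd m n a ⟨i + 1, h⟩ k ∧
    b = fun j => if (⟨i + 1, h⟩ : Fin n) ≤ j ∧ j ≤ k then a j - 1 else a j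

/-- The order of the `m`-Tamari lattice: reflexive-transitive closure of `Covers`. -/
def TamariLE (m n : ℕ) (a b : Fin n → ℕ) : Prop :=
  Relation.ReflTransGen (Covers m n) a b

/-- The elements of the `m`-Tamari lattice `T_n^(m)`. -/
def Tam (m n : ℕ) : Type := {a : Fin n → ℕ // IsDyck m n a}

/-- `μ` is the Möbius function of `T_n^(m)`. -/
def IsMobius (m n : ℕ) (μ : Tam m n → Tam m n → ℤ) : Prop :=
  ∀ a b : Tam m n, TamariLE m n a.1 b.1 →
    ∑ᶠ c ∈ {c : Tam m n | TamariLE m n a.1 c.1 ∧ TamariLE m n c.1 b.1}, μ a c =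
      if a = b then 1 else 0

/-- The minimal element `(0, m, 2m, …, (n-1)m)` of `T_n^(m)`. -/
def botSeq (m n : ℕ) : Fin n → ℕ := fun i => m * i.val

lemma botSeq_isDyck (m n : ℕ) : IsDyck m n (botSeq m n) :=
  ⟨fun i j h => Nat.mul_le_mul_left m h, fun _ => le_rfl⟩

/-- The maximal element `(0, 0, …, 0)` of `T_n^(m)`. -/
def topSeq (n : ℕ) : Fin n → ℕ := fun _ => 0

lemma topSeq_isDyck (m n : ℕ) : IsDyck m n (topSeq n) :=
  ⟨monotone_const, fun _ => Nat.zero_le _⟩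

/-- The set `D` of indices where two sequences differ and `a` has an ascent. -/
noncomputable def Dset (n : ℕ) (a b : ℕ → ℕ) : Finset ℕ :=
  (Finset.range n).filter (fun j => 1 ≤ j ∧ a j ≠ b j ∧ a (j - 1) < a j)

/-- The quantity `ps(a, j)` from the paper, relative to a set `D` of indices. -/
noncomputable def ps (m : ℕ) (D : Finset ℕ) (a : ℕ → ℕ) (j : ℕ) : ℕ :=
  (D.filter (fun i => i < j ∧ a j - 1 - a i < m * (j - i) ∧
    ∀ k, i < k → k < j → a k - a i < m * (k - i))).card

/-! ### Auxiliary definitions -/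

namespace TamAux

variable {m n : ℕ}

/-- Total weight of a sequence. -/
def wt (n : ℕ) (x : Fin n → ℕ) : ℕ := ∑ j, x j

/-- Ascent at step `p → p+1`. -/
def AscAt (n : ℕ) (x : Fin n → ℕ) (p : ℕ) : Prop :=
  ∃ h : p + 1 < n, x ⟨p, Nat.lt_of_succ_lt h⟩ < x ⟨p + 1, h⟩

/-- The set of ascent positions. -/
noncomputable def ascSet (n : ℕ) (x : Fin n → ℕ) : Finset ℕ :=
  (Finset.range n).filter (AscAt n x)

/-- All steps of `x` are `0` or `1`. -/
def Binary (n : ℕ) (x : Fin n → ℕ) : Prop :=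
  ∀ p (h : p + 1 < n),
    x ⟨p, Nat.lt_of_succ_lt h⟩ ≤ x ⟨p + 1, h⟩ ∧
    x ⟨p + 1, h⟩ ≤ x ⟨p, Nat.lt_of_succ_lt h⟩ + 1

/-- The binary sequence with ascent set `S`. -/
noncomputable def cseq (n : ℕ) (S : Finset ℕ) : Fin n → ℕ :=
  fun j => (S.filter (fun q => q < j.val)).card

lemma covers_le_pointwise {x y : Fin n → ℕ} (h : Covers m n x y) : ∀ j, y j ≤ x j := by
  obtain ⟨i, hi, k, _, _, rfl⟩ := h
  intro j; dsimp only; split <;> omega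

lemma covers_wt_lt {x y : Fin n → ℕ} (h : Covers m n x y) : wt n y < wt n x := by
  obtain ⟨i, hi, k, hasc, hpe, rfl⟩ := h
  apply Finset.sum_lt_sum
  · intro j _; split <;> omega
  · refine ⟨⟨i + 1, hi⟩, Finset.mem_univ _, ?_⟩
    rw [if_pos ⟨le_refl _, hpe.1⟩]
    omega

lemma tamariLE_wt_le {x y : Fin n → ℕ} (h : TamariLE m n x y) : wt n y ≤ wt n x := by
  induction h with
  | refl => exact le_rfl
  | tail _ hc ih => exact le_trans (covers_wt_lt hc).le ih

lemma tamariLE_wt_lt {x y : Fin n → ℕ} (h : TamariLE m n x y) (hne : x ≠ y) :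
    wt n y < wt n x := by
  rcases (Relation.ReflTransGen.cases_head h) with rfl | ⟨c, hc, hcy⟩
  · exact absurd rfl hne
  · exact lt_of_le_of_lt (tamariLE_wt_le hcy) (covers_wt_lt hc)

lemma primend_boundary (hm : 0 < m) {x : Fin n → ℕ} {s k : Fin n}
    (hpe : IsPrimEnd m n x s k) (hk : k.val + 1 < n) : x k < x ⟨k.val + 1, hk⟩ := by
  obtain ⟨hsk, hall, hterm⟩ := hpe
  have hsk' : s.val ≤ k.val := Fin.le_def.mp hsk
  rcases hterm with h1 | ⟨h2, hge⟩
  · omega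
  · have hge' : m * (k.val + 1 - s.val) ≤ x ⟨k.val + 1, hk⟩ - x s := hge
    rcases Nat.lt_or_ge s.val k.val with hks | hks
    · have h1 := hall k (by rw [Fin.lt_def]; exact hks) le_rfl
      have e : k.val + 1 - s.val = (k.val - s.val) + 1 := by omega
      rw [e, Nat.mul_succ] at hge'
      generalize m * (k.val - s.val) = t at h1 hge'
      omega
    · have hks' : k.val = s.val := by omega
      have e : k.val + 1 - s.val = 1 := by omega
      rw [e, mul_one] at hge'
      have exk : x k = x s := by congr 1; exact Fin.ext hks'
      omega

lemma covers_ascAt (hm : 0 < m) {x y : Fin n → ℕ} (h : Covers m n x y) {p : ℕ}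
    (hp : p + 1 < n) (hy : y ⟨p, Nat.lt_of_succ_lt hp⟩ < y ⟨p + 1, hp⟩) :
    x ⟨p, Nat.lt_of_succ_lt hp⟩ < x ⟨p + 1, hp⟩ := by
  obtain ⟨i, hi, k, hasc, hpe, rfl⟩ := h
  have hik : i + 1 ≤ k.val := Fin.le_def.mp hpe.1
  simp only [Fin.mk_le_mk, Fin.le_def] at hy
  split_ifs at hy with h1 h2 h2
  · omega
  · -- p in block, p+1 not: p = k
    have hpk : p = k.val := by omega
    have hk1 : k.val + 1 < n := by omega
    have hb := primend_boundary hm hpe hk1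
    have e1 : (⟨p, Nat.lt_of_succ_lt hp⟩ : Fin n) = k := Fin.ext hpk
    have e2 : (⟨p + 1, hp⟩ : Fin n) = ⟨k.val + 1, hk1⟩ := by
      simp only [Fin.mk.injEq]; omega
    rw [e1, e2]; exact hb
  · -- p not in block, p+1 in: p + 1 = i + 1
    omega
  · exact hy

lemma tamariLE_ascAt (hm : 0 < m) {x y : Fin n → ℕ} (h : TamariLE m n x y) {p : ℕ}
    (hA : AscAt n y p) : AscAt n x p := by
  induction h with
  | refl => exact hA
  | tail hxb hc ih =>
      obtain ⟨hq, hlt⟩ := hA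
      exact ih ⟨hq, covers_ascAt hm hc hq hlt⟩

def PEP (m n : ℕ) (x : Fin n → ℕ) (s : Fin n) (t : ℕ) : Prop :=
  s.val ≤ t ∧ t < n ∧ ∀ j : Fin n, s < j → j.val ≤ t → x j - x s < m * (j.val - s.val)

lemma existsPrimEnd (x : Fin n → ℕ) (s : Fin n) : ∃ k, IsPrimEnd m n x s k := by
  classical
  have hP0 : PEP m n x s s.val := by
    refine ⟨le_rfl, s.isLt, fun j hj1 hj2 => ?_⟩
    have := Fin.lt_def.mp hj1; omega
  have hsle : s.val ≤ n - 1 := by have := s.isLt; omega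
  have hK : PEP m n x s (Nat.findGreatest (PEP m n x s) (n - 1)) :=
    Nat.findGreatest_spec hsle hP0
  set K := Nat.findGreatest (PEP m n x s) (n - 1) with hKdef
  obtain ⟨hsK, hKn, hKall⟩ := hK
  refine ⟨⟨K, hKn⟩, Fin.le_def.mpr hsK, hKall, ?_⟩
  by_cases hK1 : K + 1 = n
  · exact Or.inl hK1
  · have hKle : K ≤ n - 1 := by rw [hKdef]; exact Nat.findGreatest_le (n - 1)
    have hK1n : K + 1 < n := by omega
    have hnotP : ¬ PEP m n x s (K + 1) := by
      apply Nat.findGreatest_is_greatest (n := n - 1) <;> omega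
    have hnotP' : ¬ (s.val ≤ K + 1 ∧ K + 1 < n ∧
        ∀ j : Fin n, s < j → j.val ≤ K + 1 → x j - x s < m * (j.val - s.val)) := hnotP
    push_neg at hnotP'
    obtain ⟨j, hj1, hj2, hj3⟩ := hnotP' (by omega) hK1n
    have hjK : j.val = K + 1 := by
      rcases Nat.lt_or_ge j.val (K + 1) with hlt | hge
      · exact absurd (hKall j hj1 (by omega)) (by omega)
      · omega
    have hj3' : m * (K + 1 - s.val) ≤ x ⟨K + 1, hK1n⟩ - x s := by
      have e : (⟨K + 1, hK1n⟩ : Fin n) = j := Fin.ext hjK.symm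
      have e2 : j.val - s.val = K + 1 - s.val := by omega
      rw [e2] at hj3
      rw [e]; exact hj3
    exact Or.inr ⟨hK1n, hj3'⟩

lemma mono_of_steps {x : Fin n → ℕ}
    (h : ∀ p (hp : p + 1 < n), x ⟨p, Nat.lt_of_succ_lt hp⟩ ≤ x ⟨p + 1, hp⟩) :
    Monotone x := by
  intro u v huv
  obtain ⟨u, hu⟩ := u; obtain ⟨v, hv⟩ := v
  rw [Fin.mk_le_mk] at huv
  induction v with
  | zero =>
      have : u = 0 := by omega
      subst this; exact le_rfl
  | succ w ihw =>
      rcases Nat.lt_or_ge u (w + 1) with hlt | hge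
      · have h1 := ihw (by omega) (by omega)
        exact le_trans h1 (h w hv)
      · have : u = w + 1 := by omega
        subst this; exact le_rfl

lemma descend (hm : 0 < m) (c : Fin n → ℕ)
    (hcb : ∀ p (h : p + 1 < n),
      c ⟨p, Nat.lt_of_succ_lt h⟩ ≤ c ⟨p + 1, h⟩ ∧
      c ⟨p + 1, h⟩ ≤ c ⟨p, Nat.lt_of_succ_lt h⟩ + 1) :
    ∀ (N : ℕ) (x : Fin n → ℕ), wt n x ≤ N + wt n c →
      (∀ j, c j ≤ x j) →
      (∀ p (h : p + 1 < n), x ⟨p, Nat.lt_of_succ_lt h⟩ ≤ x ⟨p + 1, h⟩) →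
      (∀ p (h : p + 1 < n), c ⟨p, Nat.lt_of_succ_lt h⟩ < c ⟨p + 1, h⟩ →
        x ⟨p, Nat.lt_of_succ_lt h⟩ < x ⟨p + 1, h⟩) →
      (∀ h0 : 0 < n, x ⟨0, h0⟩ = c ⟨0, h0⟩) →
      TamariLE m n x c := by
  intro N
  induction N with
  | zero =>
      intro x hwt h1 _ _ _
      have key : x = c := by
        by_contra hcon
        have hne : ∃ j0, c j0 < x j0 := by
          by_contra hcon2
          push_neg at hcon2
          exact hcon (funext fun j => le_antisymm (hcon2 j) (h1 j))
        obtain ⟨j0, hj0⟩ := hne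
        have hlt : wt n c < wt n x :=
          Finset.sum_lt_sum (fun j _ => h1 j) ⟨j0, Finset.mem_univ _, hj0⟩
        simp only [wt] at hwt hlt
        omega
      rw [key]
      exact Relation.ReflTransGen.refl
  | succ N ih =>
      intro x hwt h1 hmono hasc h0
      by_cases hxc : x = c
      · rw [hxc]; exact Relation.ReflTransGen.refl
      · -- find the minimal position where x and c differ
        have hQ : ∃ q, ∃ hq : q < n, c ⟨q, hq⟩ < x ⟨q, hq⟩ := by
          by_contra hcon
          push_neg at hcon
          apply hxc
          funext j
          have h2 := hcon j.val j.isLt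
          have h3 := h1 j
          have e : (⟨j.val, j.isLt⟩ : Fin n) = j := Fin.ext rfl
          rw [e] at h2
          omega
        obtain ⟨i, hs, hmin', hcs⟩ : ∃ i, ∃ hi : i + 1 < n,
            (∀ q (hq : q < n), q < i + 1 → c ⟨q, hq⟩ = x ⟨q, hq⟩) ∧
            c ⟨i + 1, hi⟩ < x ⟨i + 1, hi⟩ := by
          obtain ⟨hs, hcs⟩ := Nat.find_spec hQ
          have hn0 : 0 < n := lt_of_le_of_lt (Nat.zero_le _) hs
          have hs1 : 1 ≤ Nat.find hQ := by
            by_contra h'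
            have e : (⟨Nat.find hQ, hs⟩ : Fin n) = ⟨0, hn0⟩ := by
              simp only [Fin.mk.injEq]; omega
            rw [e] at hcs
            have := h0 hn0
            omega
          have hi : (Nat.find hQ - 1) + 1 < n := by omega
          have e : (⟨Nat.find hQ, hs⟩ : Fin n) = ⟨Nat.find hQ - 1 + 1, hi⟩ := by
            simp only [Fin.mk.injEq]; omega
          rw [e] at hcs
          refine ⟨Nat.find hQ - 1, hi, ?_, hcs⟩
          intro q hq hlt
          have hnq := Nat.find_min hQ (show q < Nat.find hQ by omega)
          have h3 := h1 ⟨q, hq⟩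
          by_contra hne2
          exact hnq ⟨hq, by omega⟩
        have hasc' : x ⟨i, Nat.lt_of_succ_lt hs⟩ < x ⟨i + 1, hs⟩ := by
          have hci := hmin' i (Nat.lt_of_succ_lt hs) (by omega)
          have hcc := (hcb i hs).1
          omega
        clear hQ
        obtain ⟨k, hpe⟩ := existsPrimEnd (m := m) x ⟨i + 1, hs⟩
        have hik : i + 1 ≤ k.val := Fin.le_def.mp hpe.1
        have hblock : ∀ q (hq : q < n), i + 1 ≤ q → q ≤ k.val →
            c ⟨q, hq⟩ < x ⟨q, hq⟩ := by
          intro q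
          induction q with
          | zero => intro hq h1' h2'; omega
          | succ r ihr =>
              intro hq hq1 hq2
              rcases Nat.lt_or_ge i r with hir | hir
              · have hr := ihr (Nat.lt_of_succ_lt hq) (by omega) (by omega)
                have hb := hcb r hq
                have hx := hmono r hq
                have h1' := h1 ⟨r + 1, hq⟩
                by_cases hca : c ⟨r, Nat.lt_of_succ_lt hq⟩ < c ⟨r + 1, hq⟩
                · have := hasc r hq hca
                  omega
                · omega
              · have e : (⟨r + 1, hq⟩ : Fin n) = ⟨i + 1, hs⟩ := by
                  simp only [Fin.mk.injEq]; omega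
                rw [e]; exact hcs
        set y : Fin n → ℕ :=
          fun j => if (⟨i + 1, hs⟩ : Fin n) ≤ j ∧ j ≤ k then x j - 1 else x j with hy
        have hcov : Covers m n x y := ⟨i, hs, k, hasc', hpe, hy⟩
        have hyval : ∀ q (hq : q < n), y ⟨q, hq⟩ =
            if i + 1 ≤ q ∧ q ≤ k.val then x ⟨q, hq⟩ - 1 else x ⟨q, hq⟩ := by
          intro q hq
          simp only [hy]
          refine if_congr ?_ rfl rfl
          rw [Fin.le_def, Fin.le_def]
        refine Relation.ReflTransGen.head hcov (ih y ?_ ?_ ?_ ?_ ?_)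
        · have := covers_wt_lt hcov
          omega
        · intro j
          have e : (⟨j.val, j.isLt⟩ : Fin n) = j := Fin.ext rfl
          rw [← e, hyval j.val j.isLt]
          split_ifs with hj
          · have := hblock j.val j.isLt hj.1 hj.2
            omega
          · have := h1 ⟨j.val, j.isLt⟩
            omega
        · intro p hp
          rw [hyval p (Nat.lt_of_succ_lt hp), hyval (p + 1) hp]
          have hx := hmono p hp
          split_ifs with b1 b2 b2
          · omega
          · -- p = k
            have hbp := hblock p (Nat.lt_of_succ_lt hp) b1.1 b1.2
            omega
          · -- p + 1 = i + 1
            have hpi : p = i := by omega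
            have e1 : (⟨p, Nat.lt_of_succ_lt hp⟩ : Fin n) = ⟨i, Nat.lt_of_succ_lt hs⟩ := by
              simp only [Fin.mk.injEq]; omega
            have e2 : (⟨p + 1, hp⟩ : Fin n) = ⟨i + 1, hs⟩ := by
              simp only [Fin.mk.injEq]; omega
            rw [e1, e2]
            omega
          · omega
        · intro p hp hca
          rw [hyval p (Nat.lt_of_succ_lt hp), hyval (p + 1) hp]
          have hx := hmono p hp
          have hxa := hasc p hp hca
          split_ifs with b1 b2 b2
          · have hbp := hblock p (Nat.lt_of_succ_lt hp) b1.1 b1.2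
            omega
          · have hbp := hblock p (Nat.lt_of_succ_lt hp) b1.1 b1.2
            omega
          · have hpi : p = i := by omega
            have hci := hmin' p (Nat.lt_of_succ_lt hp) (by omega)
            have hbp1 := hblock (p + 1) hp (by omega) b2.2
            omega
          · omega
        · intro h0n
          rw [hyval 0 h0n, if_neg (by omega)]
          exact h0 h0n


lemma dyck_lt_bound {x : Fin n → ℕ} (hx : IsDyck m n x) (j : Fin n) : x j < m * n + 1 := by
  have h2 := hx.2 j
  have h3 : m * j.val ≤ m * n := Nat.mul_le_mul_left m (le_of_lt j.isLt)
  omega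

instance : Finite (Tam m n) := by
  apply Finite.of_injective (fun (a : Tam m n) (j : Fin n) =>
    (⟨a.1 j, dyck_lt_bound a.2 j⟩ : Fin (m * n + 1)))
  intro a b h
  apply Subtype.ext
  funext j
  have h2 := congrFun h j
  simpa [Fin.mk.injEq] using h2

noncomputable instance : Fintype (Tam m n) := Fintype.ofFinite _

lemma dyck_zero {x : Fin n → ℕ} (hx : IsDyck m n x) (h0 : 0 < n) : x ⟨0, h0⟩ = 0 := by
  have := hx.2 ⟨0, h0⟩; simpa using this

lemma dyck_steps {x : Fin n → ℕ} (hx : IsDyck m n x) :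
    ∀ p (h : p + 1 < n), x ⟨p, Nat.lt_of_succ_lt h⟩ ≤ x ⟨p + 1, h⟩ :=
  fun _ _ => hx.1 (by rw [Fin.mk_le_mk]; omega)

lemma wt_top : wt n (topSeq n) = 0 := by simp [wt, topSeq]

lemma le_top (hm : 0 < m) (a : Tam m n) : TamariLE m n a.1 (topSeq n) := by
  apply descend hm (topSeq n) (fun p h => by simp [topSeq]) (wt n a.1) a.1
  · rw [wt_top]; omega
  · intro j; exact Nat.zero_le _
  · exact dyck_steps a.2
  · intro p h hc; simp [topSeq] at hc
  · intro h0; simp [topSeq, dyck_zero a.2 h0]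

lemma mem_ascSet {x : Fin n → ℕ} {p : ℕ} : p ∈ ascSet n x ↔ AscAt n x p := by
  simp only [ascSet, Finset.mem_filter, Finset.mem_range]
  constructor
  · exact fun h => h.2
  · intro h; exact ⟨by obtain ⟨h1, _⟩ := h; omega, h⟩

lemma cseq_zero (S : Finset ℕ) (h0 : 0 < n) : cseq n S ⟨0, h0⟩ = 0 := by
  simp [cseq]

lemma cseq_step (S : Finset ℕ) (p : ℕ) (h : p + 1 < n) :
    cseq n S ⟨p + 1, h⟩ = cseq n S ⟨p, Nat.lt_of_succ_lt h⟩ + (if p ∈ S then 1 else 0) := by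
  simp only [cseq]
  have hsplit : S.filter (fun q => q < p + 1) =
      S.filter (fun q => q < p) ∪ S.filter (fun q => q = p) := by
    ext q
    simp only [Finset.mem_filter, Finset.mem_union]
    constructor
    · rintro ⟨hq, hlt⟩
      rcases Nat.lt_or_ge q p with h' | h'
      · exact Or.inl ⟨hq, h'⟩
      · exact Or.inr ⟨hq, by omega⟩
    · rintro (⟨hq, hlt⟩ | ⟨hq, he⟩) <;> exact ⟨by assumption, by omega⟩
  rw [hsplit, Finset.card_union_of_disjoint]
  · congr 1
    rw [Finset.filter_eq']
    split_ifs <;> simp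
  · rw [Finset.disjoint_left]
    intro q hq1 hq2
    simp only [Finset.mem_filter] at hq1 hq2
    omega

lemma cseq_binary (S : Finset ℕ) : ∀ p (h : p + 1 < n),
    cseq n S ⟨p, Nat.lt_of_succ_lt h⟩ ≤ cseq n S ⟨p + 1, h⟩ ∧
    cseq n S ⟨p + 1, h⟩ ≤ cseq n S ⟨p, Nat.lt_of_succ_lt h⟩ + 1 := by
  intro p h
  rw [cseq_step S p h]
  split_ifs <;> omega

lemma cseq_le_index (S : Finset ℕ) (j : Fin n) : cseq n S j ≤ j.val := by
  have h1 : S.filter (fun q => q < j.val) ⊆ Finset.range j.val := by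
    intro q hq
    exact Finset.mem_range.mpr (Finset.mem_filter.mp hq).2
  have h2 := Finset.card_le_card h1
  simpa [cseq] using h2

lemma cseq_isDyck (hm : 0 < m) (S : Finset ℕ) : IsDyck m n (cseq n S) := by
  constructor
  · exact mono_of_steps (fun p h => (cseq_binary S p h).1)
  · intro j
    have h1 := cseq_le_index (n := n) S j
    have h2 : j.val ≤ m * j.val := Nat.le_mul_of_pos_left _ hm
    omega

lemma ascAt_cseq (S : Finset ℕ) (p : ℕ) (h : p + 1 < n) :
    AscAt n (cseq n S) p ↔ p ∈ S := by
  constructor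
  · rintro ⟨h', hlt⟩
    have hlt' : cseq n S ⟨p, Nat.lt_of_succ_lt h⟩ < cseq n S ⟨p + 1, h⟩ := hlt
    rw [cseq_step S p h] at hlt'
    split_ifs at hlt' with hp
    · exact hp
    · omega
  · intro hp
    refine ⟨h, ?_⟩
    rw [cseq_step S p h, if_pos hp]
    omega

lemma ascSet_cseq (S : Finset ℕ) (hS : ∀ p ∈ S, p + 1 < n) :
    ascSet n (cseq n S) = S := by
  ext q
  rw [mem_ascSet]
  constructor
  · rintro ⟨h', hlt⟩
    exact (ascAt_cseq S q h').mp ⟨h', hlt⟩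
  · intro hq
    exact (ascAt_cseq S q (hS q hq)).mpr hq

lemma binary_eq_cseq {x : Fin n → ℕ} (hd : IsDyck m n x) (hb : Binary n x) :
    x = cseq n (ascSet n x) := by
  funext j
  obtain ⟨j, hj⟩ := j
  induction j with
  | zero => rw [dyck_zero hd hj, cseq_zero]
  | succ r ihr =>
      have hr : r < n := Nat.lt_of_succ_lt hj
      rw [cseq_step (ascSet n x) r hj, ← ihr hr]
      have hbb := hb r hj
      by_cases ha : x ⟨r, hr⟩ < x ⟨r + 1, hj⟩
      · rw [if_pos (mem_ascSet.mpr ⟨hj, ha⟩)]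
        omega
      · rw [if_neg (fun hmem => ?_)]
        · omega
        · obtain ⟨h', hlt⟩ := mem_ascSet.mp hmem
          exact ha hlt

lemma eq_top_of_ascSet_empty {x : Fin n → ℕ} (hd : IsDyck m n x) (he : ascSet n x = ∅) :
    x = topSeq n := by
  funext j
  obtain ⟨j, hj⟩ := j
  induction j with
  | zero => simpa [topSeq] using dyck_zero hd hj
  | succ r ihr =>
      have hr : r < n := Nat.lt_of_succ_lt hj
      have h1 := ihr hr
      have h2 : ¬ AscAt n x r := by
        intro hA
        rw [Finset.eq_empty_iff_forall_notMem] at he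
        exact he r (mem_ascSet.mpr hA)
      have h3 : ¬ x ⟨r, hr⟩ < x ⟨r + 1, hj⟩ := fun hlt => h2 ⟨hj, hlt⟩
      have h4 := dyck_steps hd r hj
      simp only [topSeq] at h1 ⊢
      omega

lemma ascSet_top : ascSet n (topSeq n) = ∅ := by
  rw [Finset.eq_empty_iff_forall_notMem]
  intro p hp
  obtain ⟨h, hlt⟩ := mem_ascSet.mp hp
  simp [topSeq] at hlt

lemma cseq_le_of_subset {x : Fin n → ℕ} (hd : IsDyck m n x) {S : Finset ℕ}
    (hS : ∀ p ∈ S, AscAt n x p) : ∀ j, cseq n S j ≤ x j := by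
  intro j
  obtain ⟨j, hj⟩ := j
  induction j with
  | zero => rw [cseq_zero]; exact Nat.zero_le _
  | succ r ihr =>
      have hr : r < n := Nat.lt_of_succ_lt hj
      have h1 := ihr hr
      rw [cseq_step S r hj]
      have h4 := dyck_steps hd r hj
      split_ifs with hmem
      · obtain ⟨h', hlt⟩ := hS r hmem
        have hlt' : x ⟨r, hr⟩ < x ⟨r + 1, hj⟩ := hlt
        omega
      · omega

lemma le_cseq (hm : 0 < m) {x : Fin n → ℕ} (hd : IsDyck m n x) {S : Finset ℕ}
    (hS : ∀ p ∈ S, AscAt n x p) : TamariLE m n x (cseq n S) := by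
  apply descend hm (cseq n S) (cseq_binary S) (wt n x) x
  · exact Nat.le_add_right _ _
  · exact cseq_le_of_subset hd hS
  · exact dyck_steps hd
  · intro p h hc
    obtain ⟨h', hlt⟩ := hS p ((ascAt_cseq S p h).mp ⟨h, hc⟩)
    exact hlt
  · intro h0
    rw [cseq_zero, dyck_zero hd h0]


/-- The top element of `T_n^(m)`. -/
noncomputable def topT (m n : ℕ) : Tam m n := ⟨topSeq n, topSeq_isDyck m n⟩

/-- The claimed value of `μ(a, 1̂)`. -/
noncomputable def mval (a : Tam m n) : ℤ :=
  if Binary n a.1 then (-1 : ℤ) ^ (ascSet n a.1).card else 0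

noncomputable def Mmat (m n : ℕ) (μ : Tam m n → Tam m n → ℤ) :
    Matrix (Tam m n) (Tam m n) ℤ :=
  Matrix.of fun u v => if TamariLE m n u.1 v.1 then μ u v else 0

noncomputable def Zmat (m n : ℕ) : Matrix (Tam m n) (Tam m n) ℤ :=
  Matrix.of fun u v => if TamariLE m n u.1 v.1 then 1 else 0

lemma MZ_eq_one (μ : Tam m n → Tam m n → ℤ) (hμ : IsMobius m n μ) :
    Mmat m n μ * Zmat m n = 1 := by
  ext u v
  rw [Matrix.mul_apply, Matrix.one_apply]
  have hterm : ∀ c : Tam m n, Mmat m n μ u c * Zmat m n c v =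
      if (TamariLE m n u.1 c.1 ∧ TamariLE m n c.1 v.1) then μ u c else 0 := by
    intro c
    simp only [Mmat, Zmat, Matrix.of_apply]
    by_cases h1 : TamariLE m n u.1 c.1 <;> by_cases h2 : TamariLE m n c.1 v.1 <;>
      simp [h1, h2]
  rw [Finset.sum_congr rfl (fun c _ => hterm c), ← Finset.sum_filter]
  by_cases huv : TamariLE m n u.1 v.1
  · have hmo := hμ u v huv
    have hset : {c : Tam m n | TamariLE m n u.1 c.1 ∧ TamariLE m n c.1 v.1} =
        ↑(Finset.univ.filter
          (fun c : Tam m n => TamariLE m n u.1 c.1 ∧ TamariLE m n c.1 v.1)) := by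
      ext c; simp
    rw [hset, finsum_mem_coe_finset] at hmo
    exact hmo
  · rw [if_neg, Finset.sum_eq_zero]
    · intro c hc
      have hc2 := Finset.mem_filter.mp hc
      exact absurd (Relation.ReflTransGen.trans hc2.2.1 hc2.2.2) huv
    · intro he
      rw [he] at huv
      exact huv Relation.ReflTransGen.refl

lemma dual_recursion (hm : 0 < m) (μ : Tam m n → Tam m n → ℤ) (hμ : IsMobius m n μ)
    (a : Tam m n) :
    ∑ c ∈ Finset.univ.filter (fun c : Tam m n => TamariLE m n a.1 c.1), μ c (topT m n) =
      if a = topT m n then 1 else 0 := by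
  have hZM : Zmat m n * Mmat m n μ = 1 := mul_eq_one_comm.mp (MZ_eq_one μ hμ)
  have h2 : (Zmat m n * Mmat m n μ) a (topT m n) =
      (1 : Matrix (Tam m n) (Tam m n) ℤ) a (topT m n) := by rw [hZM]
  rw [Matrix.mul_apply, Matrix.one_apply] at h2
  have hterm : ∀ c : Tam m n, Zmat m n a c * Mmat m n μ c (topT m n) =
      if TamariLE m n a.1 c.1 then μ c (topT m n) else 0 := by
    intro c
    simp only [Zmat, Mmat, Matrix.of_apply]
    have hct : TamariLE m n c.1 (topT m n).1 := le_top hm c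
    by_cases h1 : TamariLE m n a.1 c.1 <;> simp [h1, hct]
  rw [Finset.sum_congr rfl (fun c _ => hterm c), ← Finset.sum_filter] at h2
  exact h2

lemma key_sum (hm : 0 < m) (a : Tam m n) :
    ∑ c ∈ Finset.univ.filter (fun c : Tam m n => TamariLE m n a.1 c.1), mval c =
      if a = topT m n then 1 else 0 := by
  classical
  have h1 : ∀ c : Tam m n, mval c =
      if Binary n c.1 then (-1 : ℤ) ^ (ascSet n c.1).card else 0 := fun c => rfl
  rw [Finset.sum_congr rfl (fun c _ => h1 c), ← Finset.sum_filter, Finset.filter_filter]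
  have hbij : ∑ c ∈ Finset.univ.filter
        (fun c : Tam m n => TamariLE m n a.1 c.1 ∧ Binary n c.1),
        (-1 : ℤ) ^ (ascSet n c.1).card =
      ∑ S ∈ (ascSet n a.1).powerset, (-1 : ℤ) ^ S.card := by
    apply Finset.sum_bij' (i := fun (c : Tam m n) (_ : _) => ascSet n c.1)
      (j := fun (S : Finset ℕ) (_ : _) => (⟨cseq n S, cseq_isDyck hm S⟩ : Tam m n))
    · intro c hc
      have hc2 := Finset.mem_filter.mp hc
      rw [Finset.mem_powerset]
      intro p hp
      exact mem_ascSet.mpr (tamariLE_ascAt hm hc2.2.1 (mem_ascSet.mp hp))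
    · intro S hS
      rw [Finset.mem_powerset] at hS
      apply Finset.mem_filter.mpr
      refine ⟨Finset.mem_univ _, ?_, ?_⟩
      · exact le_cseq hm a.2 (fun p hp => mem_ascSet.mp (hS hp))
      · exact fun p h => cseq_binary S p h
    · intro c hc
      have hc2 := Finset.mem_filter.mp hc
      exact Subtype.ext (binary_eq_cseq c.2 hc2.2.2).symm
    · intro S hS
      rw [Finset.mem_powerset] at hS
      apply ascSet_cseq
      intro p hp
      obtain ⟨h', _⟩ := mem_ascSet.mp (hS hp)
      exact h'
    · intro c hc; rfl
  rw [hbij, Finset.sum_powerset_neg_one_pow_card]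
  have hiff : (ascSet n a.1 = ∅) ↔ (a = topT m n) :=
    ⟨fun h => Subtype.ext (eq_top_of_ascSet_empty a.2 h),
     fun h => by rw [h]; exact ascSet_top⟩
  exact if_congr hiff rfl rfl

lemma mu_eq_mval (hm : 0 < m) (μ : Tam m n → Tam m n → ℤ) (hμ : IsMobius m n μ) :
    ∀ a : Tam m n, μ a (topT m n) = mval a := by
  have H : ∀ N (a : Tam m n), wt n a.1 = N → μ a (topT m n) = mval a := by
    intro N
    induction N using Nat.strong_induction_on with
    | _ N ih =>
      intro a hN
      have hrec := dual_recursion hm μ hμ a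
      have hmem : a ∈ Finset.univ.filter (fun c : Tam m n => TamariLE m n a.1 c.1) := by
        rw [Finset.mem_filter]
        exact ⟨Finset.mem_univ _, Relation.ReflTransGen.refl⟩
      rw [← Finset.add_sum_erase _ _ hmem] at hrec
      have hsum : ∑ c ∈ (Finset.univ.filter
            (fun c : Tam m n => TamariLE m n a.1 c.1)).erase a, μ c (topT m n) =
          ∑ c ∈ (Finset.univ.filter
            (fun c : Tam m n => TamariLE m n a.1 c.1)).erase a, mval c := by
        apply Finset.sum_congr rfl
        intro c hc
        have hc1 := Finset.mem_erase.mp hc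
        have hlt : wt n c.1 < N := by
          rw [← hN]
          exact tamariLE_wt_lt ((Finset.mem_filter.mp hc1.2).2)
            (fun he => hc1.1 (Subtype.ext he.symm))
        exact ih _ hlt c rfl
      rw [hsum] at hrec
      have hkey := key_sum hm a
      rw [← Finset.add_sum_erase _ mval hmem] at hkey
      omega
  exact fun a => H (wt n a.1) a rfl

lemma binary_count (hm : 0 < m) (hn : 0 < n) :
    Nat.card {a : Tam m n // Binary n a.1} = 2 ^ (n - 1) := by
  classical
  have E : {a : Tam m n // Binary n a.1} ≃
      {S : Finset ℕ // S ∈ (Finset.range (n - 1)).powerset} :=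
    { toFun := fun a => ⟨ascSet n a.1.1, by
        rw [Finset.mem_powerset]
        intro p hp
        obtain ⟨h', _⟩ := mem_ascSet.mp hp
        rw [Finset.mem_range]
        omega⟩
      invFun := fun S => ⟨⟨cseq n S.1, cseq_isDyck hm S.1⟩, fun p h => cseq_binary S.1 p h⟩
      left_inv := fun a => Subtype.ext (Subtype.ext (binary_eq_cseq a.1.2 a.2).symm)
      right_inv := fun S => Subtype.ext (ascSet_cseq S.1 (by
        intro p hp
        have h2 := Finset.mem_powerset.mp S.2 hp
        rw [Finset.mem_range] at h2
        omega)) }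
  rw [Nat.card_congr E]
  have h3 : Nat.card {S : Finset ℕ // S ∈ (Finset.range (n - 1)).powerset} =
      ((Finset.range (n - 1)).powerset).card := Nat.card_eq_finsetCard _
  rw [h3, Finset.card_powerset, Finset.card_range]

end TamAux

theorem tamari_spherical_to_top_count (m n : ℕ) (hm : 0 < m) (hn : 0 < n)
    (μ : Tam m n → Tam m n → ℤ) (hμ : IsMobius m n μ) :
    Nat.card {a : Tam m n // μ a ⟨topSeq n, topSeq_isDyck m n⟩ ≠ 0} = 2 ^ (n - 1) := by
  classical
  have hmain := TamAux.mu_eq_mval hm μ hμ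
  have hiff : ∀ a : Tam m n, (μ a ⟨topSeq n, topSeq_isDyck m n⟩ ≠ 0) ↔ TamAux.Binary n a.1 := by
    intro a
    rw [show (⟨topSeq n, topSeq_isDyck m n⟩ : Tam m n) = TamAux.topT m n from rfl, hmain a]
    unfold TamAux.mval
    split_ifs with hb
    · exact ⟨fun _ => hb, fun _ => pow_ne_zero _ (by norm_num)⟩
    · simp [hb]
  rw [Nat.card_congr (Equiv.subtypeEquivRight hiff)]
  exact TamAux.binary_count hm hn
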